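/- Let M be a von Neumann algebra acting on a complex Hilbert space H and let α : M → M be a unital, normal *-endomorphism. Then an operator Y ∈ B(H) satisfies the α-boundedness condition for some constant C ≥ 0 if and only if Y T = α(T) Y for all T ∈ M; moreover, in that case the α-boundedness condition holds with constant C = ‖Y‖². Consequently the Arveson correspondence E_α equals {Y ∈ B(H) : YT = α(T)Y for all T ∈ M}. -/

import Mathlib

open scoped ComplexOrder
open ContinuousLinearMap

noncomputable section

/-- Positivity of an `n × n` operator matrix `(a i j)`, regarded as an operator on the
`n`-fold direct sum `Hⁿ`: `∑ᵢⱼ ⟨kᵢ, a i j kⱼ⟩ ≥ 0` for all `k₁, …, kₙ ∈ H`. -/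
def PosOpMatrix {H : Type*} [NormedAddCommGroup H] [InnerProductSpace ℂ H] {n : ℕ}
    (a : Fin n → Fin n → (H →L[ℂ] H)) : Prop :=
  ∀ k : Fin n → H, 0 ≤ ∑ i, ∑ j, (inner ℂ (k i) (a i j (k j)) : ℂ)

/-- Complete positivity of a map relative to a von Neumann algebra `M`: positive operator
matrices with entries in `M` are sent to positive operator matrices. -/
def IsCPOn {H : Type*} [NormedAddCommGroup H] [InnerProductSpace ℂ H] [CompleteSpace H]
    (M : VonNeumannAlgebra H) (P : (H →L[ℂ] H) → (H →L[ℂ] H)) : Prop :=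
  ∀ (n : ℕ) (a : Fin n → Fin n → (H →L[ℂ] H)),
    (∀ i j, a i j ∈ M) → PosOpMatrix a → PosOpMatrix fun i j => P (a i j)

/-- Weak-operator continuity of a map on bounded subsets of `s`; for bounded linear maps on
von Neumann algebras this captures normality (σ-weak continuity). -/
def WOTContinuousOnBalls {H K : Type*} [NormedAddCommGroup H] [InnerProductSpace ℂ H]
    [NormedAddCommGroup K] [InnerProductSpace ℂ K]
    (s : Set (H →L[ℂ] H)) (f : (H →L[ℂ] H) → (K →L[ℂ] K)) : Prop :=
  ∀ r : ℝ, ContinuousOn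
    (fun T : H →WOT[ℂ] H =>
      ContinuousLinearMapWOT.ofCLM (f (ContinuousLinearMapWOT.toCLM T)))
    ((ContinuousLinearMapWOT.ofCLM : (H →L[ℂ] H) → H →WOT[ℂ] H) '' (s ∩ Metric.closedBall 0 r))

/-- The closure of a set of operators in the weak operator topology. -/
def WOTClosure {H K : Type*} [NormedAddCommGroup H] [InnerProductSpace ℂ H]
    [NormedAddCommGroup K] [InnerProductSpace ℂ K] (s : Set (H →L[ℂ] K)) : Set (H →L[ℂ] K) :=
  (ContinuousLinearMapWOT.ofCLM : (H →L[ℂ] K) → H →WOT[ℂ] K) ⁻¹' closure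
    ((ContinuousLinearMapWOT.ofCLM : (H →L[ℂ] K) → H →WOT[ℂ] K) '' s)

/-- A unital normal `*`-representation of (the elements of) a von Neumann algebra `M` on a
Hilbert space `K`, encoded as a function on all of `B(H)` whose properties are imposed only on
members of `M`. -/
structure IsNormalRepOn {H K : Type*} [NormedAddCommGroup H] [InnerProductSpace ℂ H]
    [CompleteSpace H] [NormedAddCommGroup K] [InnerProductSpace ℂ K] [CompleteSpace K]
    (M : VonNeumannAlgebra H) (π : (H →L[ℂ] H) → (K →L[ℂ] K)) : Prop where
  map_add : ∀ S ∈ M, ∀ T ∈ M, π (S + T) = π S + π T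
  map_smul : ∀ (c : ℂ), ∀ T ∈ M, π (c • T) = c • π T
  map_mul : ∀ S ∈ M, ∀ T ∈ M, π (S * T) = π S * π T
  map_star : ∀ T ∈ M, π (star T) = star (π T)
  map_one : π 1 = 1
  normal : WOTContinuousOnBalls (M : Set (H →L[ℂ] H)) π

/-- A completely positive linear map of a von Neumann algebra `M` into itself. -/
structure IsCPMapOn {H : Type*} [NormedAddCommGroup H] [InnerProductSpace ℂ H] [CompleteSpace H]
    (M : VonNeumannAlgebra H) (P : (H →L[ℂ] H) → (H →L[ℂ] H)) : Prop where
  map_mem : ∀ T ∈ M, P T ∈ M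
  map_add : ∀ S ∈ M, ∀ T ∈ M, P (S + T) = P S + P T
  map_smul : ∀ (c : ℂ), ∀ T ∈ M, P (c • T) = c • P T
  cp : IsCPOn M P

/-- A normal, unital, completely positive map on a von Neumann algebra `M`. -/
structure IsUNCPMapOn {H : Type*} [NormedAddCommGroup H] [InnerProductSpace ℂ H] [CompleteSpace H]
    (M : VonNeumannAlgebra H) (P : (H →L[ℂ] H) → (H →L[ℂ] H))
    extends IsCPMapOn M P : Prop where
  map_one : P 1 = 1
  normal : WOTContinuousOnBalls (M : Set (H →L[ℂ] H)) P

/-- A Stinespring triple `(π, K, W)` for `P`: `π` is a unital normal `*`-representation of `M`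
on `K`, `W : H → K` is an isometry, and `P T = W* (π T) W` for `T ∈ M`. -/
structure IsStinespring {H K : Type*} [NormedAddCommGroup H] [InnerProductSpace ℂ H]
    [CompleteSpace H] [NormedAddCommGroup K] [InnerProductSpace ℂ K] [CompleteSpace K]
    (M : VonNeumannAlgebra H) (P : (H →L[ℂ] H) → (H →L[ℂ] H))
    (π : (H →L[ℂ] H) → (K →L[ℂ] K)) (W : H →L[ℂ] K) : Prop where
  rep : IsNormalRepOn M π
  isometry : ∀ h : H, ‖W h‖ = ‖h‖
  dilation : ∀ T ∈ M, P T = ContinuousLinearMap.adjoint W ∘L (π T ∘L W)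

/-- A minimal Stinespring triple: additionally `{π(T) W h}` has dense span in `K`. -/
structure IsMinimalStinespring {H K : Type*} [NormedAddCommGroup H] [InnerProductSpace ℂ H]
    [CompleteSpace H] [NormedAddCommGroup K] [InnerProductSpace ℂ K] [CompleteSpace K]
    (M : VonNeumannAlgebra H) (P : (H →L[ℂ] H) → (H →L[ℂ] H))
    (π : (H →L[ℂ] H) → (K →L[ℂ] K)) (W : H →L[ℂ] K)
    extends IsStinespring M P π W : Prop where
  minimal :
    (Submodule.span ℂ {k : K | ∃ T ∈ M, ∃ h : H, k = π T (W h)}).topologicalClosure = ⊤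

/-- The `P`-boundedness condition with constant `C` for an operator `Y ∈ B(H)`:
`‖∑ᵢ Sᵢ Y* hᵢ‖² ≤ C ∑ᵢⱼ ⟨hᵢ, P(Sᵢ* Sⱼ) hⱼ⟩` for all `Sᵢ ∈ M` and `hᵢ ∈ H`. -/
def PBound {H : Type*} [NormedAddCommGroup H] [InnerProductSpace ℂ H] [CompleteSpace H]
    (M : VonNeumannAlgebra H) (P : (H →L[ℂ] H) → (H →L[ℂ] H))
    (Y : H →L[ℂ] H) (C : ℝ) : Prop :=
  ∀ (n : ℕ) (S : Fin n → (H →L[ℂ] H)), (∀ i, S i ∈ M) → ∀ h : Fin n → H,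
    ((‖∑ i, S i (ContinuousLinearMap.adjoint Y (h i))‖ ^ 2 : ℝ) : ℂ) ≤
      (C : ℂ) * ∑ i, ∑ j, (inner ℂ (h i) (P (star (S i) * S j) (h j)) : ℂ)

/-- The Arveson correspondence of `P`: all `Y ∈ B(H)` satisfying the `P`-boundedness
condition with some nonnegative constant. -/
def ArvesonCorrespondence {H : Type*} [NormedAddCommGroup H] [InnerProductSpace ℂ H]
    [CompleteSpace H] (M : VonNeumannAlgebra H) (P : (H →L[ℂ] H) → (H →L[ℂ] H)) :
    Set (H →L[ℂ] H) :=
  {Y | ∃ C : ℝ, 0 ≤ C ∧ PBound M P Y C}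

/-- A cp-semigroup on `M`: a semigroup `{P_t}_{t ≥ 0}` of unital, normal, completely positive
maps on `M` with `P_0 = id`. -/
structure IsCpSemigroup {H : Type*} [NormedAddCommGroup H] [InnerProductSpace ℂ H]
    [CompleteSpace H] (M : VonNeumannAlgebra H)
    (P : ℝ → (H →L[ℂ] H) → (H →L[ℂ] H)) : Prop where
  uncp : ∀ t : ℝ, 0 ≤ t → IsUNCPMapOn M (P t)
  id_zero : ∀ T ∈ M, P 0 T = T
  comp : ∀ s t : ℝ, 0 ≤ s → 0 ≤ t → ∀ T ∈ M, P (t + s) T = P t (P s T)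

/-- Weak continuity of a cp-semigroup: `t ↦ ⟨P_t(a) h, k⟩` is continuous on `[0, ∞)`. -/
def IsWeaklyContinuousSemigroup {H : Type*} [NormedAddCommGroup H] [InnerProductSpace ℂ H]
    [CompleteSpace H] (M : VonNeumannAlgebra H)
    (P : ℝ → (H →L[ℂ] H) → (H →L[ℂ] H)) : Prop :=
  ∀ T ∈ M, ∀ h k : H,
    ContinuousOn (fun t : ℝ => (inner ℂ ((P t T) h) k : ℂ)) (Set.Ici (0 : ℝ))

/-- A semigroup `{α_t}_{t ≥ 0}` of unital, normal `*`-endomorphisms of a von Neumann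
algebra `R`, with `α_0 = id`. -/
structure IsEndoSemigroup {K : Type*} [NormedAddCommGroup K] [InnerProductSpace ℂ K]
    [CompleteSpace K] (R : VonNeumannAlgebra K)
    (α : ℝ → (K →L[ℂ] K) → (K →L[ℂ] K)) : Prop where
  rep : ∀ t : ℝ, 0 ≤ t → IsNormalRepOn R (α t)
  map_mem : ∀ t : ℝ, 0 ≤ t → ∀ S ∈ R, α t S ∈ R
  id_zero : ∀ S ∈ R, α 0 S = S
  comp : ∀ s t : ℝ, 0 ≤ s → 0 ≤ t → ∀ S ∈ R, α (t + s) S = α t (α s S)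

section AuxArveson

variable {H : Type*} [NormedAddCommGroup H] [InnerProductSpace ℂ H] [CompleteSpace H]
  (M : VonNeumannAlgebra H) (α : (H →L[ℂ] H) → (H →L[ℂ] H))

/-- From the intertwining relation `Y T = α(T) Y` on `M` we get the adjoint relation
`S Y* = Y* α(S)` on `M`. -/
theorem aux_intertwine_star (hα : IsNormalRepOn M α) (Y : H →L[ℂ] H)
    (hY : ∀ T ∈ M, Y * T = α T * Y) :
    ∀ S ∈ M, S * ContinuousLinearMap.adjoint Y = ContinuousLinearMap.adjoint Y * α S := by
  intro S hS
  have h1 : Y * star S = α (star S) * Y := hY (star S) (star_mem hS)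
  have h2 : S * star Y = star Y * star (α (star S)) := by
    have := congrArg star h1
    simpa [star_mul] using this
  have h3 : star (α (star S)) = α S := by
    rw [← hα.map_star (star S) (star_mem hS), star_star]
  rw [← star_eq_adjoint, h2, h3]

/-- The intertwining relation implies the `α`-boundedness condition with constant `‖Y‖²`. -/
theorem aux_pbound_of_intertwine (hα : IsNormalRepOn M α) (Y : H →L[ℂ] H)
    (hY : ∀ T ∈ M, Y * T = α T * Y) : PBound M α Y (‖Y‖ ^ 2) := by
  intro n S hS h
  set w := ∑ i, α (S i) (h i) with hw
  have hsum : ∑ i, S i (ContinuousLinearMap.adjoint Y (h i))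
      = ContinuousLinearMap.adjoint Y w := by
    rw [hw, map_sum]
    refine Finset.sum_congr rfl fun i _ => ?_
    have h' := aux_intertwine_star M α hα Y hY (S i) (hS i)
    have h'' : (S i * ContinuousLinearMap.adjoint Y) (h i)
        = (ContinuousLinearMap.adjoint Y * α (S i)) (h i) := by rw [h']
    simpa [ContinuousLinearMap.mul_apply] using h''
  have hterm : ∀ i j, (inner ℂ (h i) (α (star (S i) * S j) (h j)) : ℂ)
      = inner ℂ (α (S i) (h i)) (α (S j) (h j)) := by
    intro i j
    rw [hα.map_mul (star (S i)) (star_mem (hS i)) (S j) (hS j), hα.map_star (S i) (hS i),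
      ContinuousLinearMap.mul_apply, star_eq_adjoint, ContinuousLinearMap.adjoint_inner_right]
  have hinner : ∑ i, ∑ j, (inner ℂ (h i) (α (star (S i) * S j) (h j)) : ℂ)
      = ((‖w‖ ^ 2 : ℝ) : ℂ) := by
    simp_rw [hterm, ← inner_sum, ← sum_inner, ← hw]
    rw [inner_self_eq_norm_sq_to_K]
    norm_cast
  rw [hsum, hinner]
  have hre : ‖ContinuousLinearMap.adjoint Y w‖ ^ 2 ≤ ‖Y‖ ^ 2 * ‖w‖ ^ 2 := by
    have h1 : ‖ContinuousLinearMap.adjoint Y w‖ ≤ ‖Y‖ * ‖w‖ := by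
      calc ‖ContinuousLinearMap.adjoint Y w‖
          ≤ ‖ContinuousLinearMap.adjoint Y‖ * ‖w‖ := ContinuousLinearMap.le_opNorm _ _
        _ = ‖Y‖ * ‖w‖ := by rw [← star_eq_adjoint, norm_star]
    calc ‖ContinuousLinearMap.adjoint Y w‖ ^ 2 ≤ (‖Y‖ * ‖w‖) ^ 2 :=
          pow_le_pow_left₀ (norm_nonneg _) h1 2
      _ = ‖Y‖ ^ 2 * ‖w‖ ^ 2 := by ring
  exact_mod_cast hre

/-- The `α`-boundedness condition (with any constant) implies the intertwining relation. -/
theorem aux_intertwine_of_pbound (hα : IsNormalRepOn M α) (Y : H →L[ℂ] H) (C : ℝ)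
    (hP : PBound M α Y C) : ∀ T ∈ M, Y * T = α T * Y := by
  have hneg : ∀ T ∈ M, α (-T) = -α T := by
    intro T hT
    have := hα.map_smul (-1 : ℂ) T hT
    simpa [neg_one_smul] using this
  have key : ∀ S ∈ M, S * ContinuousLinearMap.adjoint Y
      = ContinuousLinearMap.adjoint Y * α S := by
    intro S hS
    ext v
    have hmem2 : ∀ i, (![S, -1] : Fin 2 → (H →L[ℂ] H)) i ∈ M := by
      intro i
      fin_cases i
      · exact hS
      · exact neg_mem (one_mem M)
    have hst : α (star S) = star (α S) := hα.map_star S hS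
    have e1 : α (star S * S) = star (α S) * α S := by
      rw [hα.map_mul (star S) (star_mem hS) S hS, hst]
    have e2 : α (star S * -1) = -star (α S) := by
      rw [mul_neg_one, hneg _ (star_mem hS), hst]
    have e3 : α (star (-1 : H →L[ℂ] H) * S) = -α S := by
      rw [star_neg, star_one, neg_one_mul, hneg _ hS]
    have e4 : α (star (-1 : H →L[ℂ] H) * -1) = 1 := by
      rw [star_neg, star_one, neg_mul_neg, one_mul, hα.map_one]
    have hbound := hP 2 ![S, -1] hmem2 ![v, α S v]
    have hzero : ∑ i, ∑ j, (inner ℂ ((![v, α S v] : Fin 2 → H) i)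
        ((α (star ((![S, -1] : Fin 2 → (H →L[ℂ] H)) i) * (![S, -1] : Fin 2 → (H →L[ℂ] H)) j))
          ((![v, α S v] : Fin 2 → H) j)) : ℂ) = 0 := by
      simp only [Fin.sum_univ_two, Matrix.cons_val_zero, Matrix.cons_val_one, Matrix.head_cons,
        e1, e2, e3, e4]
      simp only [ContinuousLinearMap.mul_apply, ContinuousLinearMap.neg_apply,
        ContinuousLinearMap.one_apply, inner_neg_right, star_eq_adjoint,
        ContinuousLinearMap.adjoint_inner_right]
      ring
    rw [hzero, mul_zero] at hbound
    have hls : ∑ i, (![S, -1] : Fin 2 → (H →L[ℂ] H)) i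
        (ContinuousLinearMap.adjoint Y ((![v, α S v] : Fin 2 → H) i))
        = S (ContinuousLinearMap.adjoint Y v)
          - ContinuousLinearMap.adjoint Y (α S v) := by
      simp [Fin.sum_univ_two, sub_eq_add_neg]
    rw [hls] at hbound
    have hr : ‖S (ContinuousLinearMap.adjoint Y v)
        - ContinuousLinearMap.adjoint Y (α S v)‖ ^ 2 ≤ 0 := by exact_mod_cast hbound
    have hz : S (ContinuousLinearMap.adjoint Y v)
        - ContinuousLinearMap.adjoint Y (α S v) = 0 := by
      have := le_antisymm hr (by positivity)
      have hn : ‖S (ContinuousLinearMap.adjoint Y v)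
          - ContinuousLinearMap.adjoint Y (α S v)‖ = 0 := by
        nlinarith [norm_nonneg (S (ContinuousLinearMap.adjoint Y v)
          - ContinuousLinearMap.adjoint Y (α S v))]
      exact norm_eq_zero.mp hn
    have := sub_eq_zero.mp hz
    simpa [ContinuousLinearMap.mul_apply] using this
  intro T hT
  have hk := key (star T) (star_mem hT)
  have h3 : star (α (star T)) = α T := by
    rw [← hα.map_star (star T) (star_mem hT), star_star]
  have := congrArg star hk
  simpa [star_mul, ← star_eq_adjoint, star_star, h3] using this

end AuxArveson

/-- for a unital normal `*`-endomorphism `α` of `M`, the `α`-boundedness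
condition (for some nonnegative constant) is equivalent to the intertwining relation
`Y T = α(T) Y` on `M`, in which case the constant `‖Y‖²` works; hence
`E_α = {Y : YT = α(T)Y for all T ∈ M}`. -/
theorem arveson_of_endomorphism {H : Type*} [NormedAddCommGroup H] [InnerProductSpace ℂ H]
    [CompleteSpace H] (M : VonNeumannAlgebra H)
    (α : (H →L[ℂ] H) → (H →L[ℂ] H))
    (hα : IsNormalRepOn M α) (hmem : ∀ T ∈ M, α T ∈ M) :
    (∀ Y : H →L[ℂ] H,
      (∃ C : ℝ, 0 ≤ C ∧ PBound M α Y C) ↔ (∀ T ∈ M, Y * T = α T * Y)) ∧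
    (∀ Y : H →L[ℂ] H, (∀ T ∈ M, Y * T = α T * Y) → PBound M α Y (‖Y‖ ^ 2)) ∧
    ArvesonCorrespondence M α = {Y : H →L[ℂ] H | ∀ T ∈ M, Y * T = α T * Y} := by
  refine ⟨fun Y => ⟨?_, ?_⟩, fun Y hY => aux_pbound_of_intertwine M α hα Y hY, ?_⟩
  · rintro ⟨C, _, hP⟩
    exact aux_intertwine_of_pbound M α hα Y C hP
  · intro hY
    exact ⟨‖Y‖ ^ 2, sq_nonneg _, aux_pbound_of_intertwine M α hα Y hY⟩
  · ext Y
    constructor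
    · rintro ⟨C, _, hP⟩
      exact aux_intertwine_of_pbound M α hα Y C hP
    · intro hY
      exact ⟨‖Y‖ ^ 2, sq_nonneg _, aux_pbound_of_intertwine M α hα Y hY⟩
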